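/- For every n ≥ 8, the asymmetric index of the complete graph satisfies ai(K_n) ≤ n − 2. -/

import Mathlib

/-- A simple graph is *asymmetric* if its only automorphism is the identity. -/
def SimpleGraph.IsAsymmetric {V : Type*} (G : SimpleGraph V) : Prop :=
  ∀ f : G ≃g G, ∀ v : V, f v = v

/-- The *asymmetric index* `ai(G)`: the minimum, over all asymmetric graphs `G'` on the
same vertex set, of the number of edges in which `G` and `G'` differ (edges removed plus
edges added); `⊤` (infinity) if no asymmetric graph on the vertex set exists. -/
noncomputable def SimpleGraph.asymIndex {V : Type*} (G : SimpleGraph V) : ℕ∞ :=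
  sInf {n : ℕ∞ | ∃ G' : SimpleGraph V, G'.IsAsymmetric ∧
    n = (symmDiff G.edgeSet G'.edgeSet).encard}

/-- The auxiliary graph: path `0-1-...-(n-3)` plus pendant edge `{2, n-2}`;
vertex `n-1` is isolated. It is an asymmetric forest with `n-2` edges (for `n ≥ 8`). -/
def auxGraph (n : ℕ) : SimpleGraph (Fin n) :=
  SimpleGraph.fromRel (fun a b => (b.val = a.val + 1 ∧ b.val ≤ n - 3) ∨ (a.val = 2 ∧ b.val = n - 2))

lemma auxGraph_adj {n : ℕ} (a b : Fin n) :
    (auxGraph n).Adj a b ↔ a.val ≠ b.val ∧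
      ((b.val = a.val + 1 ∧ b.val ≤ n - 3) ∨ (a.val = 2 ∧ b.val = n - 2) ∨
       (a.val = b.val + 1 ∧ a.val ≤ n - 3) ∨ (b.val = 2 ∧ a.val = n - 2)) := by
  rw [auxGraph, SimpleGraph.fromRel_adj]
  rw [ne_eq, Fin.ext_iff]
  tauto

section Preservation

variable {V : Type*} {G G' : SimpleGraph V}

lemma leaf_map_aux (f : G ≃g G') (v : V)
    (h : ∃ w, G.Adj v w ∧ ∀ u, G.Adj v u → u = w) :
    ∃ w, G'.Adj (f v) w ∧ ∀ u, G'.Adj (f v) u → u = w := by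
  obtain ⟨w, hw, hu⟩ := h
  refine ⟨f w, f.map_adj_iff.mpr hw, fun u hu' => ?_⟩
  have h2 : G'.Adj (f v) (f (f.symm u)) := by simpa using hu'
  have h3 : G.Adj v (f.symm u) := f.map_adj_iff.mp h2
  have := hu _ h3
  have := congrArg f this
  simpa using this

lemma leaf_map (f : G ≃g G) (v : V) :
    (∃ w, G.Adj (f v) w ∧ ∀ u, G.Adj (f v) u → u = w) ↔
      (∃ w, G.Adj v w ∧ ∀ u, G.Adj v u → u = w) := by
  constructor
  · intro h
    have := leaf_map_aux f.symm (f v) h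
    simpa using this
  · exact leaf_map_aux f v

lemma deg3_map (f : G ≃g G) (v : V) :
    (∃ a b c, a ≠ b ∧ a ≠ c ∧ b ≠ c ∧ G.Adj (f v) a ∧ G.Adj (f v) b ∧ G.Adj (f v) c) ↔
      (∃ a b c, a ≠ b ∧ a ≠ c ∧ b ≠ c ∧ G.Adj v a ∧ G.Adj v b ∧ G.Adj v c) := by
  constructor
  · rintro ⟨a, b, c, hab, hac, hbc, ha, hb, hc⟩
    refine ⟨f.symm a, f.symm b, f.symm c, by simpa using hab, by simpa using hac,
      by simpa using hbc, ?_, ?_, ?_⟩ <;>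
    · rw [← f.map_adj_iff]
      simpa
  · rintro ⟨a, b, c, hab, hac, hbc, ha, hb, hc⟩
    exact ⟨f a, f b, f c, by simpa using hab, by simpa using hac, by simpa using hbc,
      f.map_adj_iff.mpr ha, f.map_adj_iff.mpr hb, f.map_adj_iff.mpr hc⟩

lemma isolated_map (f : G ≃g G) (v : V) :
    (∀ w, ¬ G.Adj (f v) w) ↔ (∀ w, ¬ G.Adj v w) := by
  constructor
  · intro h w hw
    exact h (f w) (f.map_adj_iff.mpr hw)
  · intro h w hw
    have : G.Adj (f v) (f (f.symm w)) := by simpa using hw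
    exact h _ (f.map_adj_iff.mp this)

end Preservation

section Char

variable {n : ℕ} (hn : 8 ≤ n)
include hn

lemma aux_leaf_iff (v : Fin n) :
    (∃ w, (auxGraph n).Adj v w ∧ ∀ u, (auxGraph n).Adj v u → u = w) ↔
      (v.val = 0 ∨ v.val = n - 3 ∨ v.val = n - 2) := by
  have hv := v.isLt
  constructor
  · rintro ⟨w, hw, hu⟩
    by_contra hcon
    push_neg at hcon
    rw [auxGraph_adj] at hw
    have hw' := w.isLt
    -- v is neither isolated vertex nor a leaf, so 1 ≤ v ≤ n-4 or v = 2
    have hrange : 1 ≤ v.val ∧ v.val ≤ n - 4 := by omega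
    have h1 : (auxGraph n).Adj v ⟨v.val - 1, by omega⟩ := by
      rw [auxGraph_adj]; simp only [Fin.val_mk, eq_self_iff_true, true_and, and_true, false_and, and_false, true_or, or_true, false_or, or_false, ne_eq]; omega
    have h2 : (auxGraph n).Adj v ⟨v.val + 1, by omega⟩ := by
      rw [auxGraph_adj]; simp only [Fin.val_mk, eq_self_iff_true, true_and, and_true, false_and, and_false, true_or, or_true, false_or, or_false, ne_eq]; omega
    have e1 := hu _ h1
    have e2 := hu _ h2
    rw [Fin.ext_iff] at e1 e2
    simp only [Fin.val_mk, eq_self_iff_true, true_and, and_true, false_and, and_false, true_or, or_true, false_or, or_false, ne_eq] at e1 e2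
    omega
  · intro h
    rcases h with h | h | h
    · refine ⟨⟨1, by omega⟩, ?_, ?_⟩
      · rw [auxGraph_adj]; simp only [Fin.val_mk, eq_self_iff_true, true_and, and_true, false_and, and_false, true_or, or_true, false_or, or_false, ne_eq]; omega
      · intro u hu
        rw [auxGraph_adj] at hu
        have := u.isLt
        rw [Fin.ext_iff]; simp only [Fin.val_mk, eq_self_iff_true, true_and, and_true, false_and, and_false, true_or, or_true, false_or, or_false, ne_eq]; omega
    · refine ⟨⟨n - 4, by omega⟩, ?_, ?_⟩
      · rw [auxGraph_adj]; simp only [Fin.val_mk, eq_self_iff_true, true_and, and_true, false_and, and_false, true_or, or_true, false_or, or_false, ne_eq]; omega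
      · intro u hu
        rw [auxGraph_adj] at hu
        have := u.isLt
        rw [Fin.ext_iff]; simp only [Fin.val_mk, eq_self_iff_true, true_and, and_true, false_and, and_false, true_or, or_true, false_or, or_false, ne_eq]; omega
    · refine ⟨⟨2, by omega⟩, ?_, ?_⟩
      · rw [auxGraph_adj]; simp only [Fin.val_mk, eq_self_iff_true, true_and, and_true, false_and, and_false, true_or, or_true, false_or, or_false, ne_eq]; omega
      · intro u hu
        rw [auxGraph_adj] at hu
        have := u.isLt
        rw [Fin.ext_iff]; simp only [Fin.val_mk, eq_self_iff_true, true_and, and_true, false_and, and_false, true_or, or_true, false_or, or_false, ne_eq]; omega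

lemma aux_deg3_iff (v : Fin n) :
    (∃ a b c : Fin n, a ≠ b ∧ a ≠ c ∧ b ≠ c ∧
      (auxGraph n).Adj v a ∧ (auxGraph n).Adj v b ∧ (auxGraph n).Adj v c) ↔ v.val = 2 := by
  have hv := v.isLt
  constructor
  · rintro ⟨a, b, c, hab, hac, hbc, ha, hb, hc⟩
    rw [auxGraph_adj] at ha hb hc
    rw [ne_eq, Fin.ext_iff] at hab hac hbc
    have := a.isLt; have := b.isLt; have := c.isLt
    omega
  · intro h
    refine ⟨⟨1, by omega⟩, ⟨3, by omega⟩, ⟨n - 2, by omega⟩, ?_, ?_, ?_, ?_, ?_, ?_⟩ <;>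
      first
        | (rw [ne_eq, Fin.ext_iff]; simp only [Fin.val_mk, eq_self_iff_true, true_and, and_true, false_and, and_false, true_or, or_true, false_or, or_false, ne_eq]; omega)
        | (rw [auxGraph_adj]; simp only [Fin.val_mk, eq_self_iff_true, true_and, and_true, false_and, and_false, true_or, or_true, false_or, or_false, ne_eq]; omega)

lemma aux_isolated_iff (v : Fin n) :
    (∀ w, ¬ (auxGraph n).Adj v w) ↔ v.val = n - 1 := by
  have hv := v.isLt
  constructor
  · intro h
    by_contra hcon
    rcases Nat.lt_or_ge v.val (n - 3) with h1 | h1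
    · exact h ⟨v.val + 1, by omega⟩ (by rw [auxGraph_adj]; simp only [Fin.val_mk, eq_self_iff_true, true_and, and_true, false_and, and_false, true_or, or_true, false_or, or_false, ne_eq]; omega)
    · rcases Nat.eq_or_lt_of_le h1 with h2 | h2
      · exact h ⟨v.val - 1, by omega⟩ (by rw [auxGraph_adj]; simp only [Fin.val_mk, eq_self_iff_true, true_and, and_true, false_and, and_false, true_or, or_true, false_or, or_false, ne_eq]; omega)
      · -- v.val = n-2
        exact h ⟨2, by omega⟩ (by rw [auxGraph_adj]; simp only [Fin.val_mk, eq_self_iff_true, true_and, and_true, false_and, and_false, true_or, or_true, false_or, or_false, ne_eq]; omega)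
  · intro h w hw
    rw [auxGraph_adj] at hw
    have := w.isLt
    omega

end Char

section Main

variable {n : ℕ} (hn : 8 ≤ n)
include hn

lemma aux_fix (f : auxGraph n ≃g auxGraph n) : ∀ v, f v = v := by
  have hinj : Function.Injective f := f.toEquiv.injective
  have t0 : 0 < n := by omega
  have t1 : 1 < n := by omega
  have t2 : 2 < n := by omega
  have tN2 : n - 2 < n := by omega
  have tN1 : n - 1 < n := by omega
  -- f fixes vertex 2 (unique vertex of degree ≥ 3)
  have h2 : f ⟨2, t2⟩ = ⟨2, t2⟩ := by
    have hd := (deg3_map f ⟨2, t2⟩).mpr ((aux_deg3_iff hn ⟨2, t2⟩).mpr rfl)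
    have := (aux_deg3_iff hn _).mp hd
    exact Fin.ext this
  -- f fixes vertex n-2 (the unique leaf adjacent to 2)
  have hN2 : f ⟨n - 2, tN2⟩ = ⟨n - 2, tN2⟩ := by
    have hleaf := (leaf_map f ⟨n - 2, tN2⟩).mpr
      ((aux_leaf_iff hn ⟨n - 2, tN2⟩).mpr (by right; right; rfl))
    have hval := (aux_leaf_iff hn _).mp hleaf
    have hadj : (auxGraph n).Adj ⟨n - 2, tN2⟩ ⟨2, t2⟩ := by
      rw [auxGraph_adj]; simp only [Fin.val_mk, eq_self_iff_true, true_and, and_true, false_and, and_false, true_or, or_true, false_or, or_false, ne_eq]; first | trivial | omega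
    have hadj' := f.map_adj_iff.mpr hadj
    rw [h2] at hadj'
    rw [auxGraph_adj] at hadj'
    have hlt := (f ⟨n - 2, tN2⟩).isLt
    simp only [Fin.val_mk, eq_self_iff_true, true_and, and_true, false_and, and_false, true_or, or_true, false_or, or_false, ne_eq] at hadj'
    exact Fin.ext (by (try simp only [Fin.val_mk]); omega)
  -- f fixes vertex 1
  have h1 : f ⟨1, t1⟩ = ⟨1, t1⟩ := by
    have hadj : (auxGraph n).Adj ⟨1, t1⟩ ⟨2, t2⟩ := by
      rw [auxGraph_adj]; simp only [Fin.val_mk, eq_self_iff_true, true_and, and_true, false_and, and_false, true_or, or_true, false_or, or_false, ne_eq]; first | trivial | omega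
    have hadj' := f.map_adj_iff.mpr hadj
    rw [h2] at hadj'
    rw [auxGraph_adj] at hadj'
    have hlt := (f ⟨1, t1⟩).isLt
    simp only [Fin.val_mk, eq_self_iff_true, true_and, and_true, false_and, and_false, true_or, or_true, false_or, or_false, ne_eq] at hadj'
    have hne : f ⟨1, t1⟩ ≠ ⟨n - 2, tN2⟩ := by
      rw [← hN2]
      intro h
      have h' := hinj h
      rw [Fin.ext_iff] at h'
      simp only [Fin.val_mk, eq_self_iff_true, true_and, and_true, false_and, and_false, true_or, or_true, false_or, or_false, ne_eq] at h'
      omega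
    rw [ne_eq, ← hN2] at hne
    have hneval : (f ⟨1, t1⟩).val ≠ n - 2 := by
      rw [hN2] at hne
      intro h
      exact hne (Fin.ext (by simpa using h))
    have h13 : (f ⟨1, t1⟩).val = 1 ∨ (f ⟨1, t1⟩).val = 3 := by omega
    rcases h13 with h13 | h13
    · exact Fin.ext (by simpa using h13)
    · exfalso
      have hadj0 : (auxGraph n).Adj ⟨0, t0⟩ ⟨1, t1⟩ := by
        rw [auxGraph_adj]; simp only [Fin.val_mk, eq_self_iff_true, true_and, and_true, false_and, and_false, true_or, or_true, false_or, or_false, ne_eq]; first | trivial | omega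
      have hadj0' := f.map_adj_iff.mpr hadj0
      rw [auxGraph_adj] at hadj0'
      have hleaf0 := (leaf_map f ⟨0, t0⟩).mpr
        ((aux_leaf_iff hn ⟨0, t0⟩).mpr (by left; rfl))
      have hval0 := (aux_leaf_iff hn _).mp hleaf0
      have hlt0 := (f ⟨0, t0⟩).isLt
      omega
  -- f fixes vertex 0
  have h0 : f ⟨0, t0⟩ = ⟨0, t0⟩ := by
    have hadj0 : (auxGraph n).Adj ⟨0, t0⟩ ⟨1, t1⟩ := by
      rw [auxGraph_adj]; simp only [Fin.val_mk, eq_self_iff_true, true_and, and_true, false_and, and_false, true_or, or_true, false_or, or_false, ne_eq]; first | trivial | omega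
    have hadj0' := f.map_adj_iff.mpr hadj0
    rw [h1] at hadj0'
    rw [auxGraph_adj] at hadj0'
    simp only [Fin.val_mk, eq_self_iff_true, true_and, and_true, false_and, and_false, true_or, or_true, false_or, or_false, ne_eq] at hadj0'
    have hleaf0 := (leaf_map f ⟨0, t0⟩).mpr
      ((aux_leaf_iff hn ⟨0, t0⟩).mpr (by left; rfl))
    have hval0 := (aux_leaf_iff hn _).mp hleaf0
    exact Fin.ext (by (try simp only [Fin.val_mk]); omega)
  -- f fixes every vertex on the path, by strong induction
  have main : ∀ k, ∀ hk : k < n, k ≤ n - 3 → f ⟨k, hk⟩ = ⟨k, hk⟩ := by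
    intro k
    induction k using Nat.strong_induction_on with
    | _ k ih =>
      match k with
      | 0 => intro hk _; exact h0
      | 1 => intro hk _; exact h1
      | 2 => intro hk _; exact h2
      | (m + 3) =>
        intro hk hk3
        have u2 : m + 2 < n := by omega
        have u1 : m + 1 < n := by omega
        have ih2 : f ⟨m + 2, u2⟩ = ⟨m + 2, u2⟩ := ih (m + 2) (by omega) u2 (by omega)
        have ih1 : f ⟨m + 1, u1⟩ = ⟨m + 1, u1⟩ := ih (m + 1) (by omega) u1 (by omega)
        have hadj : (auxGraph n).Adj ⟨m + 3, hk⟩ ⟨m + 2, u2⟩ := by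
          rw [auxGraph_adj]; simp only [Fin.val_mk, eq_self_iff_true, true_and, and_true, false_and, and_false, true_or, or_true, false_or, or_false, ne_eq]; first | trivial | omega
        have hadj' := f.map_adj_iff.mpr hadj
        rw [ih2] at hadj'
        rw [auxGraph_adj] at hadj'
        simp only [Fin.val_mk, eq_self_iff_true, true_and, and_true, false_and, and_false, true_or, or_true, false_or, or_false, ne_eq] at hadj'
        have hne1 : (f ⟨m + 3, hk⟩).val ≠ m + 1 := by
          intro h
          have h' : f ⟨m + 3, hk⟩ = f ⟨m + 1, u1⟩ := by
            rw [ih1]; exact Fin.ext (by simpa using h)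
          have := hinj h'
          rw [Fin.ext_iff] at this
          simp only [Fin.val_mk, eq_self_iff_true, true_and, and_true, false_and, and_false, true_or, or_true, false_or, or_false, ne_eq] at this
          omega
        have hne2 : (f ⟨m + 3, hk⟩).val ≠ n - 2 := by
          intro h
          have h' : f ⟨m + 3, hk⟩ = f ⟨n - 2, tN2⟩ := by
            rw [hN2]; exact Fin.ext (by simpa using h)
          have := hinj h'
          rw [Fin.ext_iff] at this
          simp only [Fin.val_mk, eq_self_iff_true, true_and, and_true, false_and, and_false, true_or, or_true, false_or, or_false, ne_eq] at this
          omega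
        exact Fin.ext (by (try simp only [Fin.val_mk]); omega)
  -- f fixes the isolated vertex n-1
  have hN1 : f ⟨n - 1, tN1⟩ = ⟨n - 1, tN1⟩ := by
    have hiso := (isolated_map f ⟨n - 1, tN1⟩).mpr
      ((aux_isolated_iff hn ⟨n - 1, tN1⟩).mpr rfl)
    have := (aux_isolated_iff hn _).mp hiso
    exact Fin.ext this
  -- conclude
  intro v
  have hv := v.isLt
  rcases show v.val ≤ n - 3 ∨ v.val = n - 2 ∨ v.val = n - 1 by omega with h | h | h
  · exact main v.val v.isLt h
  · have hveq : v = ⟨n - 2, tN2⟩ := Fin.ext h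
    rw [hveq]; exact hN2
  · have hveq : v = ⟨n - 1, tN1⟩ := Fin.ext h
    rw [hveq]; exact hN1

lemma compl_asym : ((auxGraph n)ᶜ).IsAsymmetric := by
  intro f v
  have key : ∀ a b : Fin n, (auxGraph n).Adj (f a) (f b) ↔ (auxGraph n).Adj a b := by
    intro a b
    have hx : ∀ x y : Fin n, (auxGraph n).Adj x y ↔ x ≠ y ∧ ¬ (auxGraph n)ᶜ.Adj x y := by
      intro x y
      rw [SimpleGraph.compl_adj]
      constructor
      · intro h; exact ⟨h.ne, fun hh => hh.2 h⟩
      · rintro ⟨hne, h⟩; by_contra hadj; exact h ⟨hne, hadj⟩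
    rw [hx, hx, f.map_adj_iff]
    have : f a ≠ f b ↔ a ≠ b := by
      constructor
      · intro h hab; exact h (by rw [hab])
      · intro h hab; exact h (f.toEquiv.injective hab)
    rw [this]
  exact aux_fix hn ⟨f.toEquiv, key _ _⟩ v

end Main

section Count

variable {n : ℕ}

/-- Enumeration of the edges of `auxGraph n`. -/
def edgeEmb (n : ℕ) (hn : 8 ≤ n) : Fin (n - 2) → Sym2 (Fin n) := fun i =>
  if h : i.val + 1 ≤ n - 3 then
    s(⟨i.val, by have := i.isLt; omega⟩, ⟨i.val + 1, by omega⟩)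
  else
    s(⟨2, by omega⟩, ⟨n - 2, by omega⟩)

variable (hn : 8 ≤ n)
include hn

lemma edgeEmb_inj : Function.Injective (edgeEmb n hn) := by
  intro i j h
  have hi := i.isLt
  have hj := j.isLt
  unfold edgeEmb at h
  split_ifs at h with h1 h2 h2 <;>
    simp only [Sym2.eq_iff, Fin.mk.injEq] at h <;>
    exact Fin.ext (by omega)

lemma edgeEmb_range : Set.range (edgeEmb n hn) = (auxGraph n).edgeSet := by
  ext e
  induction e using Sym2.ind with
  | _ a b =>
    rw [SimpleGraph.mem_edgeSet]
    constructor
    · rintro ⟨i, hi⟩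
      have hilt := i.isLt
      unfold edgeEmb at hi
      split_ifs at hi with h1 <;>
        rw [Sym2.eq_iff] at hi <;>
        rcases hi with ⟨ha, hb⟩ | ⟨ha, hb⟩ <;>
        · rw [auxGraph_adj, ← ha, ← hb]
          simp only [Fin.val_mk, eq_self_iff_true, true_and, and_true, false_and,
            and_false, true_or, or_true, false_or, or_false, ne_eq]
          first | trivial | omega
    · intro h
      have ha := a.isLt
      have hb := b.isLt
      rw [auxGraph_adj] at h
      obtain ⟨hne, hcase⟩ := h
      rcases hcase with ⟨hb1, hb2⟩ | ⟨ha1, hb1⟩ | ⟨ha1, ha2⟩ | ⟨hb1, ha1⟩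
      · refine ⟨⟨a.val, by omega⟩, ?_⟩
        unfold edgeEmb
        rw [dif_pos (by simp only [Fin.val_mk]; omega)]
        rw [Sym2.eq_iff]
        left
        constructor <;> exact Fin.ext (by simp only [Fin.val_mk]; all_goals omega)
      · refine ⟨⟨n - 3, by omega⟩, ?_⟩
        unfold edgeEmb
        rw [dif_neg (by simp only [Fin.val_mk]; omega)]
        rw [Sym2.eq_iff]
        left
        constructor <;> exact Fin.ext (by simp only [Fin.val_mk]; all_goals omega)
      · refine ⟨⟨b.val, by omega⟩, ?_⟩
        unfold edgeEmb
        rw [dif_pos (by simp only [Fin.val_mk]; omega)]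
        rw [Sym2.eq_iff]
        right
        constructor <;> exact Fin.ext (by simp only [Fin.val_mk]; all_goals omega)
      · refine ⟨⟨n - 3, by omega⟩, ?_⟩
        unfold edgeEmb
        rw [dif_neg (by simp only [Fin.val_mk]; omega)]
        rw [Sym2.eq_iff]
        right
        constructor <;> exact Fin.ext (by simp only [Fin.val_mk]; all_goals omega)

lemma auxGraph_edge_count : (auxGraph n).edgeSet.encard = ((n - 2 : ℕ) : ℕ∞) := by
  rw [← edgeEmb_range hn, ← Set.image_univ,
    Set.InjOn.encard_image ((edgeEmb_inj hn).injOn), Set.encard_univ,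
    ENat.card_eq_coe_fintype_card]
  simp

lemma auxSymmDiff_eq : symmDiff (SimpleGraph.completeGraph (Fin n)).edgeSet ((auxGraph n)ᶜ).edgeSet
    = (auxGraph n).edgeSet := by
  ext e
  induction e using Sym2.ind with
  | _ a b =>
    simp only [Set.mem_symmDiff, SimpleGraph.mem_edgeSet, SimpleGraph.compl_adj,
      SimpleGraph.completeGraph, SimpleGraph.top_adj]
    have hne : (auxGraph n).Adj a b → a ≠ b := SimpleGraph.Adj.ne
    tauto

end Count

/-- For `n ≥ 8`, the asymmetric index of the complete graph satisfies
`ai(K_n) ≤ n - 2`. -/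
theorem asymIndex_completeGraph_le {n : ℕ} (hn : 8 ≤ n) :
    (SimpleGraph.completeGraph (Fin n)).asymIndex ≤ ((n - 2 : ℕ) : ℕ∞) := by
  refine sInf_le ⟨(auxGraph n)ᶜ, compl_asym hn, ?_⟩
  rw [auxSymmDiff_eq hn, auxGraph_edge_count hn]
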